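/- With C := A/𝔪 the residue field of the ring of t-bounded elements of *ℂ modulo the ideal of t-negligible elements, and R := A_r/𝔪_r the analogous quotient for *ℝ, the field R is a real closed field, C is isomorphic to R(i), and C is an algebraically closed field extending ℂ. -/

import Mathlib

open Filter Polynomial

noncomputable section

abbrev starC (𝒰 : Ultrafilter ℂ) : Type := Filter.Germ (𝒰 : Filter ℂ) ℂ
abbrev starR (𝒰 : Ultrafilter ℂ) : Type := Filter.Germ (𝒰 : Filter ℂ) ℝ

variable (𝒰 : Ultrafilter ℂ)

def tC : starC 𝒰 := ↑(fun s : ℂ => s)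
def absG (z : starC 𝒰) : starR 𝒰 := z.map (fun w => ‖w‖)
def tAbs : starR 𝒰 := absG 𝒰 (tC 𝒰)
def tBounded (a : starC 𝒰) : Prop := ∃ N : ℕ, 0 < N ∧ absG 𝒰 a ≤ (tAbs 𝒰)⁻¹ ^ N
def tNegligible (a : starC 𝒰) : Prop := ∀ N : ℕ, 0 < N → absG 𝒰 a ≤ (tAbs 𝒰) ^ N
def tBoundedR (a : starR 𝒰) : Prop := ∃ N : ℕ, 0 < N ∧ |a| ≤ (tAbs 𝒰)⁻¹ ^ N
def tNegligibleR (a : starR 𝒰) : Prop := ∀ N : ℕ, 0 < N → |a| ≤ (tAbs 𝒰) ^ N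

/-- An order-free characterization of real closed fields: `K` is formally real
(`-1` is not a sum of squares), every element or its negative is a square, and every
polynomial of odd degree has a root. -/
def IsRealClosed' (K : Type*) [Field K] : Prop :=
  (¬ ∃ (n : ℕ) (f : Fin n → K), -1 = ∑ i, (f i) ^ 2) ∧
  (∀ x : K, (∃ y, y ^ 2 = x) ∨ (∃ y, y ^ 2 = -x)) ∧
  (∀ p : Polynomial K, Odd p.natDegree → ∃ x, p.eval x = 0)

/-! ### Auxiliary material -/

section Aux
variable {𝒰}

lemma tAbs_coe : tAbs 𝒰 = ↑(fun s : ℂ => ‖s‖) := by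
  simp [tAbs, tC, absG, Filter.Germ.map_coe]; rfl

lemma ev_ne (hnp : ∀ z : ℂ, 𝒰 ≠ pure z) : ∀ᶠ s in (𝒰 : Filter ℂ), s ≠ 0 := by
  by_contra h
  have h1 : {s : ℂ | ¬ s ≠ 0} ∈ 𝒰 := (Ultrafilter.compl_mem_iff_notMem).mpr h
  have h2 : (𝒰 : Filter ℂ) ≤ pure 0 := by
    rw [Filter.le_pure_iff]
    exact Filter.mem_of_superset h1 (by intro x hx; simpa using hx)
  exact hnp 0 (Ultrafilter.coe_le_coe.mp h2)

lemma ev_pos (hnp : ∀ z : ℂ, 𝒰 ≠ pure z) : ∀ᶠ s in (𝒰 : Filter ℂ), 0 < ‖s‖ :=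
  (ev_ne hnp).mono fun s hs => by simpa using hs

lemma ev_small (h0 : (𝒰 : Filter ℂ) ≤ nhds 0) {ε : ℝ} (hε : 0 < ε) :
    ∀ᶠ s in (𝒰 : Filter ℂ), ‖s‖ < ε := by
  have : ∀ᶠ s : ℂ in nhds 0, ‖s‖ < ε := by
    have := Metric.ball_mem_nhds (0 : ℂ) hε
    filter_upwards [this] with s hs
    simpa [Complex.dist_eq] using hs
  exact h0 this

variable (hnp : ∀ z : ℂ, 𝒰 ≠ pure z) (h0 : (𝒰 : Filter ℂ) ≤ nhds 0)
include hnp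

lemma tAbs_pos : 0 < tAbs 𝒰 := by
  rw [tAbs_coe]
  exact Filter.Germ.coe_pos.mpr (ev_pos hnp)

include h0

lemma tAbs_lt_const {r : ℝ} (hr : 0 < r) : tAbs 𝒰 < (r : starR 𝒰) := by
  rw [tAbs_coe]
  exact Filter.Germ.coe_lt.mpr (ev_small h0 hr)

lemma const_le_tAbs_inv (r : ℝ) : (r : starR 𝒰) ≤ (tAbs 𝒰)⁻¹ := by
  have h1 : tAbs 𝒰 < ((|r| + 1)⁻¹ : ℝ) := tAbs_lt_const hnp h0 (by positivity)
  have h2 : ((|r| + 1 : ℝ) : starR 𝒰) < (tAbs 𝒰)⁻¹ := by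
    have hpos := tAbs_pos hnp (𝒰 := 𝒰)
    calc ((|r| + 1 : ℝ) : starR 𝒰) = (((|r| + 1)⁻¹ : ℝ) : starR 𝒰)⁻¹ := by
          norm_cast
          rw [inv_inv]
      _ < (tAbs 𝒰)⁻¹ := by
          exact inv_strictAnti₀ hpos h1
  refine le_of_lt (lt_of_le_of_lt ?_ h2)
  have : r ≤ |r| + 1 := le_trans (le_abs_self r) (by linarith)
  exact Filter.Germ.const_le this

lemma one_le_tAbs_inv : (1 : starR 𝒰) ≤ (tAbs 𝒰)⁻¹ := by
  exact const_le_tAbs_inv hnp h0 (1 : ℝ)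

lemma one_le_tAbs_inv_pow (N : ℕ) : (1 : starR 𝒰) ≤ (tAbs 𝒰)⁻¹ ^ N :=
  one_le_pow₀ (one_le_tAbs_inv hnp h0)

lemma tAbs_inv_pow_mono {N M : ℕ} (h : N ≤ M) : (tAbs 𝒰)⁻¹ ^ N ≤ (tAbs 𝒰)⁻¹ ^ M :=
  pow_le_pow_right₀ (one_le_tAbs_inv hnp h0) h

end Aux

/-! ### Pointwise lemmas -/

lemma real_odd_monic_root (p : ℝ[X]) (hm : p.Monic) (ho : Odd p.natDegree) :
    ∃ x, p.eval x = 0 := by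
  have hnd : 0 < p.natDegree := Nat.pos_of_ne_zero (by rintro h; rw [h] at ho; simp at ho)
  have hdeg : 0 < p.degree := natDegree_pos_iff_degree_pos.mp hnd
  have htop : Tendsto (fun x => p.eval x) atTop atTop :=
    p.tendsto_atTop_of_leadingCoeff_nonneg hdeg (by rw [hm.leadingCoeff]; norm_num)
  have hbot : Tendsto (fun x => p.eval x) atBot atBot := by
    have hq : Tendsto (fun x => p.eval (-x)) atTop atBot := by
      have hcomp : (fun x => p.eval (-x)) = fun x => (p.comp (-X)).eval x := by
        funext x; simp [eval_comp]
      rw [hcomp]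
      apply Polynomial.tendsto_atBot_of_leadingCoeff_nonpos
      · rw [← natDegree_pos_iff_degree_pos, natDegree_comp]
        simpa using hnd
      · rcases ho with ⟨k, hk⟩
        have : (p.comp (-X)).leadingCoeff = (-1) ^ p.natDegree * p.leadingCoeff := by
          have := Polynomial.leadingCoeff_comp (p := p) (q := -X) (by simp)
          simpa [leadingCoeff_neg] using this
        rw [this, hm.leadingCoeff, hk]
        simp [pow_add, pow_mul]
    have := hq.comp tendsto_neg_atBot_atTop
    simpa [Function.comp_def] using this
  obtain ⟨a, ha⟩ := (hbot.eventually (eventually_lt_atBot (0 : ℝ))).exists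
  obtain ⟨b, hb⟩ := (htop.eventually (eventually_gt_atTop (0 : ℝ))).exists
  have hcont : Continuous fun x => p.eval x := p.continuous
  rcases le_total a b with hab | hab
  · obtain ⟨x, _, hx⟩ := intermediate_value_Icc hab hcont.continuousOn
      (Set.mem_Icc.mpr ⟨ha.le, hb.le⟩)
    exact ⟨x, hx⟩
  · obtain ⟨x, _, hx⟩ := intermediate_value_Icc' hab hcont.continuousOn
      (Set.mem_Icc.mpr ⟨ha.le, hb.le⟩)
    exact ⟨x, hx⟩

lemma root_norm_bound {K : Type*} [NormedField K] {p : K[X]} (hm : p.Monic)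
    {B : ℝ} (hB : 0 ≤ B) (hcoeff : ∀ k < p.natDegree, ‖p.coeff k‖ ≤ B)
    {z : K} (hz : p.eval z = 0) : ‖z‖ ≤ B + 1 := by
  have hp0 : p ≠ 0 := hm.ne_zero
  have h := Polynomial.IsRoot.norm_lt_cauchyBound hp0 (a := z) hz
  have hcb : (p.cauchyBound : ℝ) ≤ B + 1 := by
    rw [Polynomial.cauchyBound, hm.leadingCoeff]
    simp only [nnnorm_one, div_one]
    push_cast
    have : (↑(Finset.sup (Finset.range p.natDegree) fun i => ‖p.coeff i‖₊) : ℝ) ≤ B := by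
      rcases Nat.eq_zero_or_pos p.natDegree with h0 | h0
      · simp [h0, hB]
      · have : Finset.sup (Finset.range p.natDegree) (fun i => ‖p.coeff i‖₊) ≤ B.toNNReal := by
          apply Finset.sup_le
          intro i hi
          rw [← NNReal.coe_le_coe, coe_nnnorm, Real.coe_toNNReal _ hB]
          exact hcoeff i (Finset.mem_range.mp hi)
        calc (↑(Finset.sup (Finset.range p.natDegree) fun i => ‖p.coeff i‖₊) : ℝ)
            ≤ (B.toNNReal : ℝ) := by exact_mod_cast this
          _ = B := Real.coe_toNNReal _ hB
    linarith
  calc ‖z‖ = (‖z‖₊ : ℝ) := rfl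
    _ ≤ (p.cauchyBound : ℝ) := by exact_mod_cast h.le
    _ ≤ B + 1 := hcb

lemma pow_succ_bound {iv : ℝ} (hiv2 : 2 ≤ iv) (N : ℕ) : iv ^ N + 1 ≤ iv ^ (N + 2) := by
  have h1iv : (1 : ℝ) ≤ iv ^ N := one_le_pow₀ (le_trans one_le_two hiv2)
  have hsq : 4 ≤ iv ^ 2 := by nlinarith
  have h4 : iv ^ N * 4 ≤ iv ^ N * iv ^ 2 := by nlinarith
  calc iv ^ N + 1 ≤ iv ^ N * 4 := by nlinarith
    _ ≤ iv ^ N * iv ^ 2 := h4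
    _ = iv ^ (N + 2) := by ring

lemma two_le_inv_abs {a : ℝ} (hpos : 0 < a) (hhalf : a ≤ 1 / 2) : 2 ≤ a⁻¹ := by
  have ivpos : 0 < a⁻¹ := inv_pos.mpr hpos
  have hinv : a⁻¹ * a = 1 := inv_mul_cancel₀ hpos.ne'
  nlinarith [mul_le_mul_of_nonneg_left hhalf (le_of_lt ivpos)]

lemma sqrt_abs_le {x B : ℝ} (hB : 1 ≤ B) (h : |x| ≤ B) : |Real.sqrt x| ≤ B := by
  have h0 : 0 ≤ Real.sqrt x := Real.sqrt_nonneg x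
  rw [abs_of_nonneg h0]
  have h1 : Real.sqrt x ≤ Real.sqrt B := Real.sqrt_le_sqrt (le_trans (le_abs_self x) h)
  have h2 : Real.sqrt B ≤ B := by
    have : Real.sqrt B ≤ Real.sqrt (B ^ 2) := Real.sqrt_le_sqrt (by nlinarith)
    rwa [Real.sqrt_sq (by linarith)] at this
  linarith

/-! ### The main root-finding machine -/

lemma germ_root_main {K : Type} [NormedField K] {𝒰 : Ultrafilter ℂ}
    (hnp : ∀ z : ℂ, 𝒰 ≠ pure z) (h0 : (𝒰 : Filter ℂ) ≤ nhds 0)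
    (S : Subring (Filter.Germ (𝒰 : Filter ℂ) K))
    (hSmem : ∀ a : Filter.Germ (𝒰 : Filter ℂ) K,
      (∃ N : ℕ, 0 < N ∧ (Filter.Germ.map (fun x : K => ‖x‖) a) ≤ (tAbs 𝒰)⁻¹ ^ N) → a ∈ S)
    (hSbound : ∀ a ∈ S, ∃ N : ℕ, 0 < N ∧
      Filter.Germ.map (fun x : K => ‖x‖) a ≤ (tAbs 𝒰)⁻¹ ^ N)
    (I : Ideal S) {n : ℕ} (hn : 0 < n)
    (hroot : ∀ g : K[X], g.Monic → g.natDegree = n → ∃ x, g.eval x = 0)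
    (p : Polynomial (S ⧸ I)) (hp : p.Monic) (hdeg : p.natDegree = n) :
    ∃ x, p.eval x = 0 := by
  classical
  rcases subsingleton_or_nontrivial (S ⧸ I) with hsub | hnt
  · exact absurd hdeg (by rw [Subsingleton.elim p 0]; simpa using hn.ne)
  -- lift to a monic polynomial over S
  obtain ⟨q0, hq0⟩ := Polynomial.map_surjective _ (Ideal.Quotient.mk_surjective (I := I)) p
  obtain ⟨q, hqmap, hqdeg, hqmonic⟩ :=
    Polynomial.lifts_and_degree_eq_and_monic ⟨q0, hq0⟩ hp
  have hqn : q.natDegree = n := by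
    rw [← hdeg]; exact natDegree_eq_of_degree_eq hqdeg
  -- choose representatives of the coefficients
  have hrep : ∀ k : ℕ, ∃ f : ℂ → K, (↑f : Filter.Germ (𝒰 : Filter ℂ) K) = (q.coeff k : _) := by
    intro k
    obtain ⟨f, hf⟩ := Quotient.exists_rep ((q.coeff k : S) : Filter.Germ (𝒰 : Filter ℂ) K)
    exact ⟨f, hf⟩
  choose c hc using hrep
  -- the pointwise polynomials
  set F : ℂ → K[X] := fun s => X ^ n + ∑ k ∈ Finset.range n, C (c k s) * X ^ k with hF
  have hdegsum : ∀ s, (∑ k ∈ Finset.range n, C (c k s) * X ^ k).degree < (n : WithBot ℕ) := by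
    intro s
    apply lt_of_le_of_lt (Polynomial.degree_sum_le _ _)
    rw [Finset.sup_lt_iff (by exact_mod_cast WithBot.bot_lt_coe n)]
    intro k hk
    apply lt_of_le_of_lt (degree_C_mul_X_pow_le _ _)
    exact_mod_cast Finset.mem_range.mp hk
  have hFmonic : ∀ s, (F s).Monic := fun s => monic_X_pow_add (hdegsum s)
  have hFdeg : ∀ s, (F s).natDegree = n := by
    intro s
    have hd : (F s).degree = n := by
      rw [hF]
      simp only
      rw [degree_add_eq_left_of_degree_lt (by rw [degree_X_pow]; exact hdegsum s), degree_X_pow]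
    exact natDegree_eq_of_degree_eq_some hd
  have hFcoeff : ∀ s, ∀ k, k < n → (F s).coeff k = c k s := by
    intro s k hk
    rw [hF]
    simp only [coeff_add, coeff_X_pow, if_neg (Nat.ne_of_lt hk), finset_sum_coeff,
      coeff_C_mul, zero_add]
    rw [Finset.sum_eq_single k]
    · simp
    · intro j _ hj; simp [coeff_X_pow, (Ne.symm hj)]
    · intro hks; exact absurd (Finset.mem_range.mpr hk) hks
  have hFeval : ∀ s x, (F s).eval x = x ^ n + ∑ k ∈ Finset.range n, c k s * x ^ k := by
    intro s x
    rw [hF]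
    simp [eval_finset_sum]
  -- pointwise roots
  have hex : ∀ s, ∃ x : K, (F s).eval x = 0 := fun s => hroot (F s) (hFmonic s) (hFdeg s)
  choose z hz using hex
  -- the germ-level evaluation identity
  have hmapdeg : (q.map S.subtype).natDegree < n + 1 :=
    lt_of_le_of_lt natDegree_map_le (by rw [hqn]; exact Nat.lt_succ_self n)
  have key : Polynomial.eval (↑z : Filter.Germ (𝒰 : Filter ℂ) K) (q.map S.subtype)
      = ↑(fun s => (F s).eval (z s)) := by
    rw [eval_eq_sum_range' hmapdeg, Finset.sum_range_succ]
    have hcoef : ∀ k, (q.map S.subtype).coeff k = ((q.coeff k : S) : _) := fun k => coeff_map _ _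
    have htop : (q.map S.subtype).coeff n = 1 := by
      rw [hcoef]
      have : q.coeff n = 1 := by rw [← hqn]; exact hqmonic.coeff_natDegree
      rw [this]; rfl
    have hfun : (fun s => (F s).eval (z s))
        = ((∑ k ∈ Finset.range n, c k * z ^ k) + z ^ n : ℂ → K) := by
      funext s
      rw [hFeval]
      simp [Finset.sum_apply]
      ring
    rw [hfun]
    have : ((↑((∑ k ∈ Finset.range n, c k * z ^ k) + z ^ n : ℂ → K)) :
        Filter.Germ (𝒰 : Filter ℂ) K)
        = Filter.Germ.coeRingHom (𝒰 : Filter ℂ) ((∑ k ∈ Finset.range n, c k * z ^ k) + z ^ n) :=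
      rfl
    rw [this, map_add, map_sum, map_pow]
    simp only [map_mul, map_pow]
    congr 1
    · apply Finset.sum_congr rfl
      intro k hk
      rw [hcoef, ← hc k]
      rfl
    · rw [htop, one_mul]
      rfl
  -- boundedness of the root germ
  have hpow : ∀ M : ℕ, (tAbs 𝒰)⁻¹ ^ M
      = (↑(fun s : ℂ => ((‖s‖)⁻¹) ^ M) : starR 𝒰) := by
    intro M
    rw [tAbs_coe, ← Filter.Germ.coe_inv, ← Filter.Germ.coe_pow]
    rfl
  choose Nk hNkpos hNk using fun k : Fin n => hSbound _ (SetLike.coe_mem (q.coeff (k : ℕ)))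
  obtain ⟨N, hN⟩ : ∃ N : ℕ, N = Finset.univ.sup Nk + 1 := ⟨_, rfl⟩
  have hev : ∀ k : Fin n, ∀ᶠ s in (𝒰 : Filter ℂ), ‖c (k : ℕ) s‖ ≤ ((‖s‖)⁻¹) ^ N := by
    intro k
    have h1 : Filter.Germ.map (fun x : K => ‖x‖) (↑(c (k : ℕ))) ≤ (tAbs 𝒰)⁻¹ ^ N := by
      rw [hc]
      refine le_trans (hNk k) (tAbs_inv_pow_mono hnp h0 ?_)
      rw [hN]
      exact le_trans (Finset.le_sup (Finset.mem_univ k)) (Nat.le_succ _)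
    rw [Filter.Germ.map_coe, hpow N] at h1
    exact Filter.Germ.coe_le.mp h1
  have hall : ∀ᶠ s in (𝒰 : Filter ℂ), (∀ k : Fin n, ‖c (k : ℕ) s‖ ≤ ((‖s‖)⁻¹) ^ N)
      ∧ 0 < ‖s‖ ∧ ‖s‖ ≤ 1 / 2 := by
    filter_upwards [Filter.eventually_all.mpr hev, ev_pos hnp,
      ev_small h0 (by norm_num : (0 : ℝ) < 1 / 2)] with s hs h1 h2
    exact ⟨hs, h1, h2.le⟩
  have hzbound : ∀ᶠ s in (𝒰 : Filter ℂ), ‖z s‖ ≤ ((‖s‖)⁻¹) ^ (N + 2) := by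
    filter_upwards [hall] with s hsall
    obtain ⟨hcs, hpos, hhalf⟩ := hsall
    have hiv2 : 2 ≤ (‖s‖)⁻¹ := two_le_inv_abs hpos hhalf
    have hb : ‖z s‖ ≤ (‖s‖)⁻¹ ^ N + 1 := by
      apply root_norm_bound (hFmonic s) (by positivity) _ (hz s)
      intro k hk
      rw [hFdeg s] at hk
      rw [hFcoeff s k hk]
      exact hcs ⟨k, hk⟩
    exact le_trans hb (pow_succ_bound hiv2 N)
  have hzmem : (↑z : Filter.Germ (𝒰 : Filter ℂ) K) ∈ S := by
    apply hSmem
    refine ⟨N + 2, Nat.succ_pos _, ?_⟩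
    rw [Filter.Germ.map_coe, hpow (N + 2)]
    exact Filter.Germ.coe_le.mpr hzbound
  set zS : S := ⟨↑z, hzmem⟩ with hzS
  have hevalS : q.eval zS = 0 := by
    have hSsub : Function.Injective (S.subtype) := Subtype.coe_injective
    apply hSsub
    rw [map_zero]
    calc S.subtype (q.eval zS)
        = Polynomial.eval₂ S.subtype (S.subtype zS) q := (Polynomial.eval₂_at_apply _ _).symm
      _ = Polynomial.eval (S.subtype zS) (q.map S.subtype) := (Polynomial.eval_map _ _).symm
      _ = Polynomial.eval (↑z : Filter.Germ (𝒰 : Filter ℂ) K) (q.map S.subtype) := rfl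
      _ = ↑(fun s => (F s).eval (z s)) := key
      _ = ↑(fun _ : ℂ => (0 : K)) := congrArg _ (funext fun s => hz s)
      _ = 0 := rfl
  refine ⟨Ideal.Quotient.mk I zS, ?_⟩
  rw [← hqmap, Polynomial.eval_map, Polynomial.eval₂_at_apply, hevalS, map_zero]


/-! ### Bridging lemmas and maps -/

section Bridge
variable {𝒰}

lemma tAbs_inv_pow_coe (M : ℕ) : (tAbs 𝒰)⁻¹ ^ M
    = (↑(fun s : ℂ => ((‖s‖)⁻¹) ^ M) : starR 𝒰) := by
  rw [tAbs_coe, ← Filter.Germ.coe_inv, ← Filter.Germ.coe_pow]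
  rfl

lemma mapnorm_R (a : starR 𝒰) : Filter.Germ.map (fun x : ℝ => ‖x‖) a = |a| := by
  refine Filter.Germ.inductionOn a fun f => ?_
  rw [Filter.Germ.map_coe, Filter.Germ.abs_def, Filter.Germ.map_coe]
  apply congrArg
  funext s
  exact Real.norm_eq_abs (f s)

lemma mapnorm_C (a : starC 𝒰) : Filter.Germ.map (fun x : ℂ => ‖x‖) a = absG 𝒰 a := by
  refine Filter.Germ.inductionOn a fun f => ?_
  rw [Filter.Germ.map_coe]
  unfold absG
  rw [Filter.Germ.map_coe]

lemma abs_coe_R (f : ℂ → ℝ) : |(↑f : starR 𝒰)| = ↑(fun s => |f s|) := by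
  rw [Filter.Germ.abs_def, Filter.Germ.map_coe]
  rfl

lemma absG_coe (f : ℂ → ℂ) : absG 𝒰 (↑f : starC 𝒰) = ↑(fun s => ‖f s‖) := by
  unfold absG
  rw [Filter.Germ.map_coe]
  rfl

end Bridge

lemma germ_map_ofReal_mul {𝒰 : Ultrafilter ℂ} (f g : ℂ → ℝ) :
    Filter.Germ.map (fun x : ℝ => (x : ℂ)) ((↑f : starR 𝒰) * (↑g : starR 𝒰))
      = Filter.Germ.map (fun x : ℝ => (x : ℂ)) (↑f : starR 𝒰)
        * Filter.Germ.map (fun x : ℝ => (x : ℂ)) (↑g : starR 𝒰) := by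
  rw [← Filter.Germ.coe_mul, Filter.Germ.map_coe, Filter.Germ.map_coe, Filter.Germ.map_coe,
    ← Filter.Germ.coe_mul]
  exact Filter.Germ.coe_eq.mpr (Filter.Eventually.of_forall fun s => by simp)

lemma germ_map_ofReal_add {𝒰 : Ultrafilter ℂ} (f g : ℂ → ℝ) :
    Filter.Germ.map (fun x : ℝ => (x : ℂ)) ((↑f : starR 𝒰) + (↑g : starR 𝒰))
      = Filter.Germ.map (fun x : ℝ => (x : ℂ)) (↑f : starR 𝒰)
        + Filter.Germ.map (fun x : ℝ => (x : ℂ)) (↑g : starR 𝒰) := by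
  rw [← Filter.Germ.coe_add, Filter.Germ.map_coe, Filter.Germ.map_coe, Filter.Germ.map_coe,
    ← Filter.Germ.coe_add]
  exact Filter.Germ.coe_eq.mpr (Filter.Eventually.of_forall fun s => by simp)

/-- The coercion of real germs to complex germs. -/
def rMapC (𝒰 : Ultrafilter ℂ) : starR 𝒰 →+* starC 𝒰 where
  toFun := Filter.Germ.map (fun x : ℝ => (x : ℂ))
  map_one' := by
    show Filter.Germ.map (fun x : ℝ => (x : ℂ)) 1 = 1
    have h1 : (1 : starR 𝒰) = ((1 : ℝ) : starR 𝒰) := rfl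
    rw [h1, Filter.Germ.map_const, Complex.ofReal_one]
    rfl
  map_mul' x y := Filter.Germ.inductionOn₂ x y fun f g => germ_map_ofReal_mul f g
  map_zero' := by
    show Filter.Germ.map (fun x : ℝ => (x : ℂ)) 0 = 0
    have h1 : (0 : starR 𝒰) = ((0 : ℝ) : starR 𝒰) := rfl
    rw [h1, Filter.Germ.map_const, Complex.ofReal_zero]
    rfl
  map_add' x y := Filter.Germ.inductionOn₂ x y fun f g => germ_map_ofReal_add f g

lemma absG_rMapC {𝒰 : Ultrafilter ℂ} (x : starR 𝒰) : absG 𝒰 (rMapC 𝒰 x) = |x| := by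
  refine Filter.Germ.inductionOn x fun f => ?_
  show absG 𝒰 (Filter.Germ.map (fun x : ℝ => (x : ℂ)) ↑f) = |(↑f : starR 𝒰)|
  rw [Filter.Germ.map_coe, absG_coe, abs_coe_R]
  apply congrArg
  funext s
  exact (Complex.norm_real (f s)).trans (Real.norm_eq_abs _)

attribute [local instance] Ideal.Quotient.field

/-! ### The main theorem -/

set_option maxHeartbeats 2000000 in
set_option synthInstance.maxHeartbeats 400000 in
/-- With `C := A/𝔪` the residue field of the ring of `t`-bounded elements of `*ℂ` modulo
the ideal of `t`-negligible elements, and `R := A_r/𝔪_r` the analogous quotient for `*ℝ`: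
`R` is a real closed field, `C ≅ R(i)`, and `C` is an algebraically closed field
extending `ℂ`. -/
theorem stmt1 (hnp : ∀ z : ℂ, 𝒰 ≠ pure z) (h0 : (𝒰 : Filter ℂ) ≤ nhds 0)
    (A : Subring (starC 𝒰)) (hA : ∀ a : starC 𝒰, a ∈ A ↔ tBounded 𝒰 a)
    (m : Ideal A) (hm : ∀ a : A, a ∈ m ↔ tNegligible 𝒰 (a : starC 𝒰)) [m.IsMaximal]
    (Ar : Subring (starR 𝒰)) (hAr : ∀ a : starR 𝒰, a ∈ Ar ↔ tBoundedR 𝒰 a)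
    (mr : Ideal Ar) (hmr : ∀ a : Ar, a ∈ mr ↔ tNegligibleR 𝒰 (a : starR 𝒰))
    [mr.IsMaximal] :
    IsRealClosed' (Ar ⧸ mr) ∧
    IsAlgClosed (A ⧸ m) ∧
    Nonempty ((A ⧸ m) ≃+* AdjoinRoot (X ^ 2 + 1 : Polynomial (Ar ⧸ mr))) ∧
    (∃ _ : ℂ →+* (A ⧸ m), True) ∧
    (∃ _ : ℝ →+* (Ar ⧸ mr), True) := by
  classical
  -- membership criteria in the normed form used by `germ_root_main`
  have hSmemR : ∀ a : starR 𝒰,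
      (∃ N : ℕ, 0 < N ∧ Filter.Germ.map (fun x : ℝ => ‖x‖) a ≤ (tAbs 𝒰)⁻¹ ^ N) → a ∈ Ar := by
    intro a h; rw [mapnorm_R] at h; exact (hAr a).mpr h
  have hSboundR : ∀ a ∈ Ar, ∃ N : ℕ, 0 < N ∧
      Filter.Germ.map (fun x : ℝ => ‖x‖) a ≤ (tAbs 𝒰)⁻¹ ^ N := by
    intro a ha; rw [mapnorm_R]; exact (hAr a).mp ha
  have hSmemC : ∀ a : starC 𝒰,
      (∃ N : ℕ, 0 < N ∧ Filter.Germ.map (fun x : ℂ => ‖x‖) a ≤ (tAbs 𝒰)⁻¹ ^ N) → a ∈ A := by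
    intro a h; rw [mapnorm_C] at h; exact (hA a).mpr h
  have hSboundC : ∀ a ∈ A, ∃ N : ℕ, 0 < N ∧
      Filter.Germ.map (fun x : ℂ => ‖x‖) a ≤ (tAbs 𝒰)⁻¹ ^ N := by
    intro a ha; rw [mapnorm_C]; exact (hA a).mp ha
  -- minus one is not a sum of squares in `Ar ⧸ mr`
  have hsumsq : ∀ (k : ℕ) (f : Fin k → Ar ⧸ mr), -1 ≠ ∑ i, (f i) ^ 2 := by
    intro k f h
    choose g hg using fun i => Ideal.Quotient.mk_surjective (f i)
    have hmem : (1 + ∑ i, (g i) ^ 2) ∈ mr := by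
      rw [← Ideal.Quotient.eq_zero_iff_mem, map_add, map_sum, map_one]
      simp only [map_pow, hg]
      rw [← h]; ring
    have hneg := (hmr _).mp hmem 1 one_pos
    have hcoe : ((1 + ∑ i, (g i) ^ 2 : Ar) : starR 𝒰)
        = 1 + ∑ i, ((g i : starR 𝒰)) ^ 2 := by push_cast; ring
    have h1le : (1 : starR 𝒰) ≤ ((1 + ∑ i, (g i) ^ 2 : Ar) : starR 𝒰) := by
      rw [hcoe]
      have hnn : (0 : starR 𝒰) ≤ ∑ i, ((g i : starR 𝒰)) ^ 2 :=
        Finset.sum_nonneg fun i _ => sq_nonneg _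
      linarith
    rw [pow_one] at hneg
    rw [abs_of_nonneg (le_trans zero_le_one h1le)] at hneg
    have hlt : tAbs 𝒰 < 1 := by
      have := tAbs_lt_const hnp h0 one_pos
      exact this
    linarith
  -- part 1 : real closedness
  have hRC : IsRealClosed' (Ar ⧸ mr) := by
    refine ⟨?_, ?_, ?_⟩
    · rintro ⟨k, f, hf⟩; exact hsumsq k f hf
    · -- squares
      have haux : ∀ (x : Ar ⧸ mr) (a : Ar), Ideal.Quotient.mk mr a = x →
          ∀ f : ℂ → ℝ, (↑f : starR 𝒰) = (a : starR 𝒰) →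
          (∀ᶠ s in (𝒰 : Filter ℂ), 0 ≤ f s) → ∃ y, y ^ 2 = x := by
        intro x a hmk f hf hpos
        obtain ⟨N, hNpos, hNb⟩ := (hAr _).mp a.2
        have hfb : ∀ᶠ s in (𝒰 : Filter ℂ), |f s| ≤ ((‖s‖)⁻¹) ^ N := by
          rw [← hf, abs_coe_R, tAbs_inv_pow_coe] at hNb
          exact Filter.Germ.coe_le.mp hNb
        have hone : ∀ᶠ s in (𝒰 : Filter ℂ), (1 : ℝ) ≤ ((‖s‖)⁻¹) ^ N := by
          have h1 := one_le_tAbs_inv_pow hnp h0 (𝒰 := 𝒰) N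
          rw [tAbs_inv_pow_coe] at h1
          exact Filter.Germ.coe_le.mp h1
        have hybound : ∀ᶠ s in (𝒰 : Filter ℂ),
            |Real.sqrt (f s)| ≤ ((‖s‖)⁻¹) ^ N := by
          filter_upwards [hfb, hone] with s h1 h2
          exact sqrt_abs_le h2 h1
        have hymem : (↑(fun s => Real.sqrt (f s)) : starR 𝒰) ∈ Ar := by
          apply (hAr _).mpr
          exact ⟨N, hNpos, by
            rw [abs_coe_R, tAbs_inv_pow_coe]; exact Filter.Germ.coe_le.mpr hybound⟩
        refine ⟨Ideal.Quotient.mk mr ⟨_, hymem⟩, ?_⟩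
        rw [← map_pow, ← hmk]
        congr 1
        apply Subtype.coe_injective
        push_cast
        rw [← hf, ← Filter.Germ.coe_pow]
        apply Filter.Germ.coe_eq.mpr
        filter_upwards [hpos] with s hs
        show Real.sqrt (f s) ^ 2 = f s
        exact Real.sq_sqrt hs
      intro x
      obtain ⟨a, hmk⟩ := Ideal.Quotient.mk_surjective x
      obtain ⟨f, hf⟩ : ∃ f : ℂ → ℝ, (↑f : starR 𝒰) = (a : starR 𝒰) := Quotient.exists_rep _
      rcases Ultrafilter.em 𝒰 (fun s => 0 ≤ f s) with hc | hc
      · exact Or.inl (haux x a hmk f hf hc)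
      · refine Or.inr (haux (-x) (-a) (by rw [map_neg, hmk]) (fun s => -f s) ?_ ?_)
        · have h1 : ((- a : Ar) : starR 𝒰) = -(a : starR 𝒰) := by push_cast; ring
          have h2 : (↑(fun s => -f s) : starR 𝒰) = -(↑f : starR 𝒰) := by
            rw [← Filter.Germ.coe_neg]; rfl
          rw [h1, h2, hf]
        · exact hc.mono fun s hs => by simpa using le_of_not_ge (by simpa using hs)
    · -- odd degree polynomials
      intro p hoddp
      have hnd : 0 < p.natDegree := Nat.pos_of_ne_zero (fun h => by simp [h] at hoddp)
      have hp0 : p ≠ 0 := fun h => by simp [h] at hnd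
      have hm' : (p * C (p.leadingCoeff)⁻¹).Monic := monic_mul_leadingCoeff_inv hp0
      have hd' : (p * C (p.leadingCoeff)⁻¹).natDegree = p.natDegree :=
        natDegree_mul_leadingCoeff_inv _ hp0
      obtain ⟨x, hx⟩ := germ_root_main hnp h0 Ar hSmemR hSboundR mr hnd
        (fun g hg hdg => real_odd_monic_root g hg (hdg ▸ hoddp)) _ hm' hd'
      refine ⟨x, ?_⟩
      rw [eval_mul, eval_C, mul_eq_zero] at hx
      rcases hx with h | h
      · exact h
      · exact absurd h (inv_ne_zero (leadingCoeff_ne_zero.mpr hp0))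
  -- part 2 : algebraic closedness
  have hAC : IsAlgClosed (A ⧸ m) := by
    apply IsAlgClosed.of_exists_root
    intro p hmon hirr
    have hnd : 0 < p.natDegree := by
      rcases Nat.eq_zero_or_pos p.natDegree with h | h
      · exact absurd (hmon.natDegree_eq_zero.mp h ▸ isUnit_one) hirr.not_isUnit
      · exact h
    exact germ_root_main hnp h0 A hSmemC hSboundC m hnd
      (fun g hg hdg => by
        obtain ⟨x, hx⟩ := Complex.exists_root
          (natDegree_pos_iff_degree_pos.mp (hdg ▸ hnd))
        exact ⟨x, hx⟩) p hmon rfl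
  -- the inclusion of `Ar` into `A` and of the quotients
  have hφmem : ∀ a : Ar, rMapC 𝒰 (a : starR 𝒰) ∈ A := by
    intro a
    obtain ⟨N, hNpos, hb⟩ := (hAr _).mp a.2
    exact (hA _).mpr ⟨N, hNpos, by rw [absG_rMapC]; exact hb⟩
  let φA : Ar →+* A := ((rMapC 𝒰).comp Ar.subtype).codRestrict A (fun a => hφmem a)
  have hφA_coe : ∀ a : Ar, ((φA a : A) : starC 𝒰) = rMapC 𝒰 (a : starR 𝒰) := fun a => rfl
  have hφker : ∀ a : Ar, a ∈ mr → φA a ∈ m := by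
    intro a ha
    apply (hm _).mpr
    intro N hN
    have hsm := (hmr _).mp ha N hN
    show absG 𝒰 ((φA a : A) : starC 𝒰) ≤ _
    rw [hφA_coe, absG_rMapC]
    exact hsm
  let φbar : (Ar ⧸ mr) →+* (A ⧸ m) :=
    Ideal.Quotient.lift mr ((Ideal.Quotient.mk m).comp φA)
      (fun a ha => by
        show Ideal.Quotient.mk m (φA a) = 0
        exact Ideal.Quotient.eq_zero_iff_mem.mpr (hφker a ha))
  -- the imaginary unit
  have hiAmem : (↑(fun _ : ℂ => Complex.I) : starC 𝒰) ∈ A := by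
    apply (hA _).mpr
    refine ⟨1, one_pos, ?_⟩
    rw [absG_coe, pow_one]
    have h1 : (↑(fun _ : ℂ => ‖Complex.I‖) : starR 𝒰) = ((1 : ℝ) : starR 𝒰) := by
      apply Filter.Germ.coe_eq.mpr
      exact Filter.Eventually.of_forall fun s => by simp
    rw [h1]
    exact const_le_tAbs_inv hnp h0 _
  have hiA2 : (⟨_, hiAmem⟩ : A) ^ 2 + 1 = 0 := by
    apply Subtype.coe_injective
    push_cast
    rw [← Filter.Germ.coe_pow]
    have : ((↑((fun _ : ℂ => Complex.I) ^ 2) : starC 𝒰) + 1) = ↑(fun _ : ℂ => (0 : ℂ)) := by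
      rw [show (1 : starC 𝒰) = ↑(fun _ : ℂ => (1 : ℂ)) from rfl, ← Filter.Germ.coe_add]
      apply Filter.Germ.coe_eq.mpr
      exact Filter.Eventually.of_forall fun s => by
        show Complex.I ^ 2 + 1 = 0
        rw [Complex.I_sq]; ring
    rw [this]
    rfl
  have hi2 : Polynomial.eval₂ φbar (Ideal.Quotient.mk m (⟨_, hiAmem⟩ : A))
      (X ^ 2 + 1 : (Ar ⧸ mr)[X]) = 0 := by
    rw [eval₂_add, eval₂_one, eval₂_pow, eval₂_X, ← map_pow, ← map_one (Ideal.Quotient.mk m),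
      ← map_add, hiA2, map_zero]
  -- irreducibility of X^2+1
  have hdeg2 : (X ^ 2 + 1 : (Ar ⧸ mr)[X]).natDegree = 2 := by
    rw [← C_1, natDegree_X_pow_add_C]
  have hirr : Irreducible (X ^ 2 + 1 : (Ar ⧸ mr)[X]) := by
    rw [irreducible_iff_roots_eq_zero_of_degree_le_three (by rw [hdeg2]) (by rw [hdeg2]; omega)]
    rw [Multiset.eq_zero_iff_forall_notMem]
    intro r hr
    have hne : (X ^ 2 + 1 : (Ar ⧸ mr)[X]) ≠ 0 := by
      intro hcon; rw [hcon] at hdeg2; simp at hdeg2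
    rw [mem_roots hne] at hr
    have hr2 : r ^ 2 = -1 := by
      have := hr
      rw [IsRoot.def] at this
      simp only [eval_add, eval_pow, eval_X, eval_one] at this
      linear_combination this
    exact hsumsq 1 (fun _ => r) (by rw [← hr2]; simp)
  haveI : Fact (Irreducible (X ^ 2 + 1 : (Ar ⧸ mr)[X])) := ⟨hirr⟩
  let ψ : AdjoinRoot (X ^ 2 + 1 : (Ar ⧸ mr)[X]) →+* (A ⧸ m) :=
    AdjoinRoot.lift φbar (Ideal.Quotient.mk m (⟨_, hiAmem⟩ : A)) hi2
  have hinj : Function.Injective ψ := by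
    letI : Field (AdjoinRoot (X ^ 2 + 1 : (Ar ⧸ mr)[X])) := AdjoinRoot.instField
    exact ψ.injective
  have hsurj : Function.Surjective ψ := by
    intro x
    obtain ⟨a, hmk⟩ := Ideal.Quotient.mk_surjective x
    obtain ⟨f, hf⟩ : ∃ f : ℂ → ℂ, (↑f : starC 𝒰) = (a : starC 𝒰) := Quotient.exists_rep _
    obtain ⟨N, hNpos, hab⟩ := (hA _).mp a.2
    have hfP : ∀ᶠ s in (𝒰 : Filter ℂ), ‖f s‖ ≤ ((‖s‖)⁻¹) ^ N := by
      rw [← hf, absG_coe, tAbs_inv_pow_coe] at hab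
      exact Filter.Germ.coe_le.mp hab
    have hremem : (↑(fun s => (f s).re) : starR 𝒰) ∈ Ar := by
      apply (hAr _).mpr
      refine ⟨N, hNpos, ?_⟩
      rw [abs_coe_R, tAbs_inv_pow_coe]
      apply Filter.Germ.coe_le.mpr
      filter_upwards [hfP] with s hs
      exact le_trans (Complex.abs_re_le_norm (f s)) hs
    have himmem : (↑(fun s => (f s).im) : starR 𝒰) ∈ Ar := by
      apply (hAr _).mpr
      refine ⟨N, hNpos, ?_⟩
      rw [abs_coe_R, tAbs_inv_pow_coe]
      apply Filter.Germ.coe_le.mpr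
      filter_upwards [hfP] with s hs
      exact le_trans (Complex.abs_im_le_norm (f s)) hs
    refine ⟨AdjoinRoot.of _ (Ideal.Quotient.mk mr ⟨_, hremem⟩)
      + AdjoinRoot.of _ (Ideal.Quotient.mk mr ⟨_, himmem⟩) * AdjoinRoot.root _, ?_⟩
    rw [map_add, map_mul, AdjoinRoot.lift_of, AdjoinRoot.lift_of, AdjoinRoot.lift_root]
    have hφbar : ∀ b : Ar, φbar (Ideal.Quotient.mk mr b) = Ideal.Quotient.mk m (φA b) :=
      fun b => rfl
    rw [hφbar, hφbar, ← map_mul, ← map_add, ← hmk]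
    congr 1
    apply Subtype.coe_injective
    push_cast
    rw [hφA_coe, hφA_coe, ← hf]
    show rMapC 𝒰 (↑(fun s => (f s).re)) + rMapC 𝒰 (↑(fun s => (f s).im))
        * (↑(fun _ : ℂ => Complex.I) : starC 𝒰) = (↑f : starC 𝒰)
    have h1 : rMapC 𝒰 (↑(fun s => (f s).re))
        = (↑(fun s => ((f s).re : ℂ)) : starC 𝒰) := Filter.Germ.map_coe _ _
    have h2 : rMapC 𝒰 (↑(fun s => (f s).im))
        = (↑(fun s => ((f s).im : ℂ)) : starC 𝒰) := Filter.Germ.map_coe _ _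
    rw [h1, h2, ← Filter.Germ.coe_mul, ← Filter.Germ.coe_add]
    apply Filter.Germ.coe_eq.mpr
    exact Filter.Eventually.of_forall fun s => by
      show ((f s).re : ℂ) + ((f s).im : ℂ) * Complex.I = f s
      exact Complex.re_add_im (f s)
  -- the constants
  have hconstC : ∀ c : ℂ, (↑(fun _ : ℂ => c) : starC 𝒰) ∈ A := by
    intro c
    apply (hA _).mpr
    refine ⟨1, one_pos, ?_⟩
    rw [absG_coe, pow_one]
    have h1 : (↑(fun _ : ℂ => ‖c‖) : starR 𝒰) = ((‖c‖ : ℝ) : starR 𝒰) := rfl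
    rw [h1]
    exact const_le_tAbs_inv hnp h0 _
  have hconstR : ∀ c : ℝ, (↑(fun _ : ℂ => c) : starR 𝒰) ∈ Ar := by
    intro c
    apply (hAr _).mpr
    refine ⟨1, one_pos, ?_⟩
    rw [abs_coe_R, pow_one]
    have h1 : (↑(fun _ : ℂ => |c|) : starR 𝒰) = ((|c| : ℝ) : starR 𝒰) := rfl
    rw [h1]
    exact const_le_tAbs_inv hnp h0 _
  refine ⟨hRC, hAC, ⟨(RingEquiv.ofBijective ψ ⟨hinj, hsurj⟩).symm⟩, ?_, ?_⟩
  · exact ⟨(Ideal.Quotient.mk m).comp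
      (((Filter.Germ.coeRingHom _).comp (Pi.constRingHom ℂ ℂ)).codRestrict A hconstC), trivial⟩
  · exact ⟨(Ideal.Quotient.mk mr).comp
      (((Filter.Germ.coeRingHom _).comp (Pi.constRingHom ℂ ℝ)).codRestrict Ar hconstR), trivial⟩

end
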